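/- The Milnor number of the loop polynomial w = x^p y + x y^q is pq; that is, the complex vector space ℂ[x,y]/(∂w/∂x, ∂w/∂y) has dimension pq. -/

import Mathlib

open MvPolynomial

noncomputable section MilnorLoopAux

namespace MilnorLoopAux

abbrev P2 : Type := MvPolynomial (Fin 2) ℂ

variable (p q : ℕ)

/-- `∂w/∂x` for the loop polynomial. -/
def fpoly : P2 := (p : P2) * X 0 ^ (p - 1) * X 1 + X 1 ^ q

/-- `∂w/∂y` for the loop polynomial. -/
def gpoly : P2 := X 0 ^ p + (q : P2) * X 0 * X 1 ^ (q - 1)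

/-- Indicator basis vector of `(a, b)` in the rectangle; zero if out of range. -/
def eps (a b : ℕ) : Fin p × Fin q → ℂ :=
  fun kl => if kl.1.1 = a ∧ kl.2.1 = b then 1 else 0

lemma eps_left {a : ℕ} (b : ℕ) (h : p ≤ a) : eps p q a b = 0 := by
  funext kl
  simp only [eps, Pi.zero_apply, ite_eq_right_iff]
  rintro ⟨h1, -⟩
  exact absurd h (by have := kl.1.2; omega)

lemma eps_right (a : ℕ) {b : ℕ} (h : q ≤ b) : eps p q a b = 0 := by
  funext kl
  simp only [eps, Pi.zero_apply, ite_eq_right_iff]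
  rintro ⟨-, h2⟩
  exact absurd h (by have := kl.2.2; omega)

/-- Normal form of the monomial `x^a y^b` in the Milnor algebra. -/
def NF (a b : ℕ) : Fin p × Fin q → ℂ :=
  if b = 0 ∧ p ≤ a then (-(q : ℂ)) • eps p q (a - p + 1) (q - 1)
  else if a = 0 ∧ q ≤ b then (-(p : ℂ)) • eps p q (p - 1) (b - q + 1)
  else eps p q a b

lemma NF_rect {a b : ℕ} (ha : a < p) (hb : b < q) : NF p q a b = eps p q a b := by
  unfold NF
  rw [if_neg (by rintro ⟨h1, h2⟩; omega), if_neg (by rintro ⟨h1, h2⟩; omega)]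

lemma NF_f (hp : 2 ≤ p) (hq : 2 ≤ q) (a b : ℕ) :
    (p : ℂ) • NF p q (a + (p - 1)) (b + 1) + NF p q a (b + q) = 0 := by
  have h1 : NF p q (a + (p - 1)) (b + 1) = eps p q (a + (p - 1)) (b + 1) := by
    unfold NF
    rw [if_neg (by rintro ⟨h1, h2⟩; omega), if_neg (by rintro ⟨h1, h2⟩; omega)]
  rcases Nat.eq_zero_or_pos a with rfl | ha
  · have h2 : NF p q 0 (b + q) = (-(p : ℂ)) • eps p q (p - 1) (b + q - q + 1) := by
      unfold NF
      rw [if_neg (by rintro ⟨h1, h2⟩; omega), if_pos ⟨rfl, by omega⟩]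
    rw [h1, h2, show b + q - q + 1 = b + 1 by omega, show 0 + (p - 1) = p - 1 by omega,
      ← add_smul]
    simp
  · have h2 : NF p q a (b + q) = eps p q a (b + q) := by
      unfold NF
      rw [if_neg (by rintro ⟨h1, h2⟩; omega), if_neg (by rintro ⟨h1, h2⟩; omega)]
    rw [h1, h2, eps_left p q _ (by omega), eps_right p q _ (by omega)]
    simp

lemma NF_g (hp : 2 ≤ p) (hq : 2 ≤ q) (a b : ℕ) :
    NF p q (a + p) b + (q : ℂ) • NF p q (a + 1) (b + (q - 1)) = 0 := by
  have h1 : NF p q (a + 1) (b + (q - 1)) = eps p q (a + 1) (b + (q - 1)) := by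
    unfold NF
    rw [if_neg (by rintro ⟨h1, h2⟩; omega), if_neg (by rintro ⟨h1, h2⟩; omega)]
  rcases Nat.eq_zero_or_pos b with rfl | hb
  · have h2 : NF p q (a + p) 0 = (-(q : ℂ)) • eps p q (a + p - p + 1) (q - 1) := by
      unfold NF
      rw [if_pos ⟨rfl, by omega⟩]
    rw [h1, h2, show a + p - p + 1 = a + 1 by omega, show 0 + (q - 1) = q - 1 by omega,
      add_comm, ← add_smul]
    simp
  · have h2 : NF p q (a + p) b = eps p q (a + p) b := by
      unfold NF
      rw [if_neg (by rintro ⟨h1, h2⟩; omega), if_neg (by rintro ⟨h1, h2⟩; omega)]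
    rw [h1, h2, eps_left p q _ (by omega), eps_right p q _ (by omega)]
    simp

/-- The normal-form linear map. -/
def phi : P2 →ₗ[ℂ] (Fin p × Fin q → ℂ) :=
  (basisMonomials (Fin 2) ℂ).constr ℂ fun s => NF p q (s 0) (s 1)

lemma phi_monomial (s : Fin 2 →₀ ℕ) (c : ℂ) :
    phi p q (monomial s c) = c • NF p q (s 0) (s 1) := by
  have h : (monomial s c : P2) = c • (basisMonomials (Fin 2) ℂ) s := by
    simp [smul_monomial]
  rw [h, map_smul, phi, Module.Basis.constr_basis]

lemma monomial_eq_pow (s : Fin 2 →₀ ℕ) :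
    (monomial s 1 : P2) = X 0 ^ (s 0) * X 1 ^ (s 1) := by
  rw [monomial_eq, C_1, one_mul, Finsupp.prod_fintype _ _ (fun i => pow_zero _),
    Fin.prod_univ_two]

lemma phi_pow (a b : ℕ) : phi p q (X 0 ^ a * X 1 ^ b) = NF p q a b := by
  have h : (X 0 ^ a * X 1 ^ b : P2)
      = monomial (Finsupp.single 0 a + Finsupp.single 1 b) 1 := by
    rw [monomial_eq_pow]
    simp [Finsupp.single_apply]
  rw [h, phi_monomial, one_smul]
  simp [Finsupp.single_apply]

lemma cast_mul_phi (n : ℕ) (h : P2) :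
    phi p q ((n : P2) * h) = (n : ℂ) • phi p q h := by
  rw [← nsmul_eq_mul, map_nsmul, Nat.cast_smul_eq_nsmul]

lemma phi_mul_f (hp : 2 ≤ p) (hq : 2 ≤ q) (h : P2) :
    phi p q (h * fpoly p q) = 0 := by
  have key : (phi p q) ∘ₗ (LinearMap.mulRight ℂ (fpoly p q)) = 0 := by
    apply (basisMonomials (Fin 2) ℂ).ext
    intro s
    simp only [LinearMap.comp_apply, LinearMap.mulRight_apply, coe_basisMonomials,
      LinearMap.zero_apply]
    rw [monomial_eq_pow]
    have hx : (X 0 ^ (s 0) * X 1 ^ (s 1) : P2) * fpoly p q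
        = (p : P2) * (X 0 ^ (s 0 + (p - 1)) * X 1 ^ (s 1 + 1))
          + X 0 ^ (s 0) * X 1 ^ (s 1 + q) := by
      rw [fpoly]; ring
    rw [hx, map_add, cast_mul_phi, phi_pow, phi_pow, NF_f p q hp hq]
  simpa using LinearMap.congr_fun key h

lemma phi_mul_g (hp : 2 ≤ p) (hq : 2 ≤ q) (h : P2) :
    phi p q (h * gpoly p q) = 0 := by
  have key : (phi p q) ∘ₗ (LinearMap.mulRight ℂ (gpoly p q)) = 0 := by
    apply (basisMonomials (Fin 2) ℂ).ext
    intro s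
    simp only [LinearMap.comp_apply, LinearMap.mulRight_apply, coe_basisMonomials,
      LinearMap.zero_apply]
    rw [monomial_eq_pow]
    have hx : (X 0 ^ (s 0) * X 1 ^ (s 1) : P2) * gpoly p q
        = X 0 ^ (s 0 + p) * X 1 ^ (s 1)
          + (q : P2) * (X 0 ^ (s 0 + 1) * X 1 ^ (s 1 + (q - 1))) := by
      rw [gpoly]; ring
    rw [hx, map_add, cast_mul_phi, phi_pow, phi_pow, NF_g p q hp hq]
  simpa using LinearMap.congr_fun key h

lemma phi_ker (hp : 2 ≤ p) (hq : 2 ≤ q) {z : P2}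
    (hz : z ∈ Ideal.span {fpoly p q, gpoly p q}) : phi p q z = 0 := by
  obtain ⟨u, w, huw⟩ := Ideal.mem_span_pair.mp hz
  rw [← huw, map_add, phi_mul_f p q hp hq, phi_mul_g p q hp hq, add_zero]

/-- The Jacobian ideal. -/
def Ipq : Ideal P2 := Ideal.span {fpoly p q, gpoly p q}

/-- The quotient map onto the Milnor algebra. -/
def piq : P2 →ₐ[ℂ] (P2 ⧸ Ipq p q) := Ideal.Quotient.mkₐ ℂ (Ipq p q)

/-- The candidate basis family. -/
def v : Fin p × Fin q → (P2 ⧸ Ipq p q) :=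
  fun ij => piq p q (X 0 ^ (ij.1 : ℕ) * X 1 ^ (ij.2 : ℕ))

lemma fpoly_mem : fpoly p q ∈ Ipq p q := Ideal.subset_span (by simp)

lemma gpoly_mem : gpoly p q ∈ Ipq p q := Ideal.subset_span (by simp)

lemma piq_eq_mk (x : P2) : piq p q x = Ideal.Quotient.mk (Ipq p q) x := rfl

lemma cast_mul_piq (n : ℕ) (h : P2) :
    piq p q ((n : P2) * h) = (n : ℂ) • piq p q h := by
  rw [← nsmul_eq_mul, map_nsmul, Nat.cast_smul_eq_nsmul]

lemma hpq_ne (hp : 2 ≤ p) (hq : 2 ≤ q) : ((1 : ℂ) - (p : ℂ) * (q : ℂ)) ≠ 0 := by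
  rw [sub_ne_zero]
  intro hcon
  have h4 : 4 ≤ p * q := le_trans (by norm_num) (Nat.mul_le_mul hp hq)
  have hc : (1 : ℕ) = p * q := by exact_mod_cast hcon
  omega

lemma L1 (hp : 2 ≤ p) (hq : 2 ≤ q) : (X 0 * X 1 ^ q : P2) ∈ Ipq p q := by
  set I := Ipq p q with hI
  obtain ⟨p', hp'⟩ : ∃ k, p = k + 2 := ⟨p - 2, by omega⟩
  obtain ⟨q', hq'⟩ : ∃ k, q = k + 2 := ⟨q - 2, by omega⟩
  have h3 : ((1 : P2) - (p : P2) * (q : P2)) * (X 0 * X 1 ^ q)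
      = X 0 * fpoly p q - (p : P2) * (X 1 * gpoly p q) := by
    subst hp' hq'
    rw [fpoly, gpoly, show p' + 2 - 1 = p' + 1 from rfl, show q' + 2 - 1 = q' + 1 from rfl]
    ring
  have h4 : ((1 : P2) - (p : P2) * (q : P2)) * (X 0 * X 1 ^ q) ∈ I := by
    rw [h3]
    exact I.sub_mem (I.mul_mem_left _ (fpoly_mem p q))
      (I.mul_mem_left _ (I.mul_mem_left _ (gpoly_mem p q)))
  have h5 := I.mul_mem_left (C (((1 : ℂ) - (p : ℂ) * (q : ℂ))⁻¹)) h4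
  have e1 : ((1 : P2) - (p : P2) * (q : P2)) = C ((1 : ℂ) - (p : ℂ) * (q : ℂ)) := by
    rw [map_sub, map_one, map_mul, map_natCast, map_natCast]
  have h6 : (C (((1 : ℂ) - (p : ℂ) * (q : ℂ))⁻¹) : P2)
      * (((1 : P2) - (p : P2) * (q : P2)) * (X 0 * X 1 ^ q)) = X 0 * X 1 ^ q := by
    rw [e1, ← mul_assoc, ← C_mul, inv_mul_cancel₀ (hpq_ne p q hp hq), C_1, one_mul]
  rwa [h6] at h5

lemma L2 (hp : 2 ≤ p) (hq : 2 ≤ q) : (X 0 ^ p * X 1 : P2) ∈ Ipq p q := by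
  set I := Ipq p q with hI
  obtain ⟨q', hq'⟩ : ∃ k, q = k + 2 := ⟨q - 2, by omega⟩
  have h3 : (X 0 ^ p * X 1 : P2) = X 1 * gpoly p q - (q : P2) * (X 0 * X 1 ^ q) := by
    subst hq'
    rw [gpoly, show q' + 2 - 1 = q' + 1 from rfl]
    ring
  rw [h3]
  exact I.sub_mem (I.mul_mem_left _ (gpoly_mem p q)) (I.mul_mem_left _ (L1 p q hp hq))

lemma Z1 (hp : 2 ≤ p) (hq : 2 ≤ q) (a b : ℕ) :
    piq p q (X 0 ^ (a + 1) * X 1 ^ (b + q)) = 0 := by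
  have h : (X 0 ^ (a + 1) * X 1 ^ (b + q) : P2)
      = (X 0 ^ a * X 1 ^ b) * (X 0 * X 1 ^ q) := by ring
  have hz : piq p q (X 0 * X 1 ^ q) = 0 := by
    rw [piq_eq_mk]; exact Ideal.Quotient.eq_zero_iff_mem.mpr (L1 p q hp hq)
  rw [h, map_mul, hz, mul_zero]

lemma Z2 (hp : 2 ≤ p) (hq : 2 ≤ q) (a b : ℕ) :
    piq p q (X 0 ^ (a + p) * X 1 ^ (b + 1)) = 0 := by
  have h : (X 0 ^ (a + p) * X 1 ^ (b + 1) : P2)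
      = (X 0 ^ a * X 1 ^ b) * (X 0 ^ p * X 1) := by ring
  have hz : piq p q (X 0 ^ p * X 1) = 0 := by
    rw [piq_eq_mk]; exact Ideal.Quotient.eq_zero_iff_mem.mpr (L2 p q hp hq)
  rw [h, map_mul, hz, mul_zero]

lemma R1 (b : ℕ) : piq p q (X 1 ^ (b + q))
    = (-(p : ℂ)) • piq p q (X 0 ^ (p - 1) * X 1 ^ (b + 1)) := by
  have h0 : piq p q (X 1 ^ b * fpoly p q) = 0 := by
    rw [piq_eq_mk, Ideal.Quotient.eq_zero_iff_mem]
    exact (Ipq p q).mul_mem_left _ (fpoly_mem p q)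
  have hx : (X 1 ^ b * fpoly p q : P2)
      = (p : P2) * (X 0 ^ (p - 1) * X 1 ^ (b + 1)) + X 1 ^ (b + q) := by
    rw [fpoly]; ring
  rw [hx, map_add, cast_mul_piq, add_comm, add_eq_zero_iff_eq_neg] at h0
  rw [h0, neg_smul]

lemma R2 (a : ℕ) : piq p q (X 0 ^ (a + p))
    = (-(q : ℂ)) • piq p q (X 0 ^ (a + 1) * X 1 ^ (q - 1)) := by
  have h0 : piq p q (X 0 ^ a * gpoly p q) = 0 := by
    rw [piq_eq_mk, Ideal.Quotient.eq_zero_iff_mem]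
    exact (Ipq p q).mul_mem_left _ (gpoly_mem p q)
  have hx : (X 0 ^ a * gpoly p q : P2)
      = X 0 ^ (a + p) + (q : P2) * (X 0 ^ (a + 1) * X 1 ^ (q - 1)) := by
    rw [gpoly]; ring
  rw [hx, map_add, cast_mul_piq, add_eq_zero_iff_eq_neg] at h0
  rw [h0, neg_smul]

lemma mono_mem (hp : 2 ≤ p) (hq : 2 ≤ q) (a b : ℕ) :
    piq p q (X 0 ^ a * X 1 ^ b) ∈ Submodule.span ℂ (Set.range (v p q)) := by
  set W := Submodule.span ℂ (Set.range (v p q)) with hW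
  by_cases hb : b < q
  · by_cases ha : a < p
    · exact Submodule.subset_span ⟨(⟨a, ha⟩, ⟨b, hb⟩), rfl⟩
    · rcases Nat.eq_zero_or_pos b with rfl | hb1
      · rw [show (X 0 ^ a * X 1 ^ 0 : P2) = X 0 ^ (a - p + p) by
          rw [pow_zero, mul_one]; congr 1; omega]
        rw [R2 p q (a - p)]
        by_cases ha' : a - p + 1 < p
        · exact Submodule.smul_mem _ _
            (Submodule.subset_span ⟨(⟨a - p + 1, ha'⟩, ⟨q - 1, by omega⟩), rfl⟩)
        · rw [show a - p + 1 = (a - p + 1 - p) + p by omega,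
            show q - 1 = (q - 2) + 1 by omega, Z2 p q hp hq]
          simp
      · rw [show a = (a - p) + p by omega, show b = (b - 1) + 1 by omega, Z2 p q hp hq]
        simp
  · by_cases ha : a = 0
    · subst ha
      rw [show (X 0 ^ 0 * X 1 ^ b : P2) = X 1 ^ ((b - q) + q) by
        rw [pow_zero, one_mul]; congr 1; omega]
      rw [R1 p q (b - q)]
      by_cases hb' : b - q + 1 < q
      · exact Submodule.smul_mem _ _
          (Submodule.subset_span ⟨(⟨p - 1, by omega⟩, ⟨b - q + 1, hb'⟩), rfl⟩)
      · rw [show p - 1 = (p - 2) + 1 by omega,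
          show b - q + 1 = (b - q + 1 - q) + q by omega, Z1 p q hp hq]
        simp
    · rw [show a = (a - 1) + 1 by omega, show b = (b - q) + q by omega, Z1 p q hp hq]
      simp

lemma span_top (hp : 2 ≤ p) (hq : 2 ≤ q) :
    ⊤ ≤ Submodule.span ℂ (Set.range (v p q)) := by
  set W := Submodule.span ℂ (Set.range (v p q)) with hW
  intro z hz
  obtain ⟨h, rfl⟩ := Ideal.Quotient.mkₐ_surjective ℂ (Ipq p q) z
  clear hz
  show piq p q h ∈ W
  induction h using MvPolynomial.induction_on' with
  | monomial s c =>
    have he : (monomial s c : P2) = c • (X 0 ^ (s 0) * X 1 ^ (s 1)) := by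
      rw [← monomial_eq_pow, smul_monomial, smul_eq_mul, mul_one]
    rw [he, map_smul]
    exact W.smul_mem _ (mono_mem p q hp hq _ _)
  | add f g hf' hg' =>
    rw [map_add]
    exact W.add_mem hf' hg'

lemma lin_indep (hp : 2 ≤ p) (hq : 2 ≤ q) : LinearIndependent ℂ (v p q) := by
  rw [Fintype.linearIndependent_iff]
  intro gg hgg
  have hπz : piq p q (∑ ij : Fin p × Fin q, gg ij • (X 0 ^ (ij.1 : ℕ) * X 1 ^ (ij.2 : ℕ)))
      = 0 := by
    rw [map_sum]
    simp only [map_smul]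
    exact hgg
  have hzI : (∑ ij : Fin p × Fin q, gg ij • (X 0 ^ (ij.1 : ℕ) * X 1 ^ (ij.2 : ℕ))) ∈ Ipq p q := by
    rw [piq_eq_mk, Ideal.Quotient.eq_zero_iff_mem] at hπz
    exact hπz
  have h0 : phi p q (∑ ij : Fin p × Fin q, gg ij • (X 0 ^ (ij.1 : ℕ) * X 1 ^ (ij.2 : ℕ))) = 0 :=
    phi_ker p q hp hq hzI
  rw [map_sum] at h0
  simp only [map_smul, phi_pow] at h0
  have hrect : ∀ ij : Fin p × Fin q, NF p q (ij.1 : ℕ) (ij.2 : ℕ)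
      = eps p q (ij.1 : ℕ) (ij.2 : ℕ) := fun ij => NF_rect p q ij.1.2 ij.2.2
  simp only [hrect] at h0
  intro ij
  have key : (∑ kl : Fin p × Fin q, gg kl • eps p q (kl.1 : ℕ) (kl.2 : ℕ)) ij = gg ij := by
    rw [Finset.sum_apply, Finset.sum_eq_single ij]
    · simp [eps]
    · intro kl _ hne
      simp only [Pi.smul_apply, eps, smul_eq_mul]
      rw [if_neg, mul_zero]
      rintro ⟨h1, h2⟩
      exact hne (Prod.ext (Fin.ext h1.symm) (Fin.ext h2.symm))
    · intro hnotmem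
      exact absurd (Finset.mem_univ ij) hnotmem
  rw [← key, h0, Pi.zero_apply]

theorem main (hp : 2 ≤ p) (hq : 2 ≤ q) :
    Module.finrank ℂ (P2 ⧸ Ipq p q) = p * q := by
  have B : Module.Basis (Fin p × Fin q) ℂ (P2 ⧸ Ipq p q) :=
    Module.Basis.mk (lin_indep p q hp hq) (span_top p q hp hq)
  rw [Module.finrank_eq_card_basis B, Fintype.card_prod, Fintype.card_fin, Fintype.card_fin]

end MilnorLoopAux

end MilnorLoopAux

/-- The Milnor number of the loop polynomial `w = x^p y + x y^q` is `pq`: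
the complex vector space `ℂ[x,y]/(∂w/∂x, ∂w/∂y)` has dimension `pq`, where
`∂w/∂x = p x^(p-1) y + y^q` and `∂w/∂y = x^p + q x y^(q-1)`. -/
theorem milnor_number_loop (p q : ℕ) (hp : 2 ≤ p) (hq : 2 ≤ q) :
    Module.finrank ℂ
      (MvPolynomial (Fin 2) ℂ ⧸
        Ideal.span {(p : MvPolynomial (Fin 2) ℂ) * X 0 ^ (p - 1) * X 1 + X 1 ^ q,
                    X 0 ^ p + (q : MvPolynomial (Fin 2) ℂ) * X 0 * X 1 ^ (q - 1)}) = p * q :=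
  MilnorLoopAux.main p q hp hq
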